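/- Let A ⋊_α^σ G be a category crossed product. An element x = Σ_{s∈G} a_s u_s belongs to the center of A ⋊_α^σ G only if a_s = 0 whenever d(s) ≠ c(s). Consequently every central element can be written as Σ_{e∈ob(G)} Σ_{s∈G_e} a_s u_s, and x is central if and only if each component Σ_{s∈G_e} a_s u_s is central in the monoid crossed product A_e ⋊_{α_e}^{σ_e} G_e and, for all distinct objects e, f and all r, g ∈ G with c(r)=c(g)=f, d(r)=d(g)=e, one has Σ_{s∈G_e, rs=g} σ_r(a_s) α(r,s) = Σ_{t∈G_f, tr=g} a_t α(t,r). -/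

import Mathlib

open CategoryTheory

/-- The type of morphisms of a category `G`, bundled with domain and codomain. -/
abbrev CMor (G : Type*) [Category G] := Σ e f : G, e ⟶ f

/-- Transport along an equality of objects, as a ring homomorphism. -/
def castRH {G : Type*} (A : G → Type*) [∀ e, Ring (A e)]
    {e f : G} (h : e = f) : A e →+* A f := by subst h; exact RingHom.id _

/-- The carrier of the category crossed product `A ⋊_α^σ G`: finitely supported
formal sums `Σ_s a_s u_s` with `a_s ∈ A_{c(s)}`. -/
abbrev CP {G : Type*} [Category G] (A : G → Type*) [∀ e, Ring (A e)] :=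
  Π₀ p : CMor G, A p.2.1

open Classical in
/-- The multiplication of the category crossed product:
`(a u_s)(b u_t) = a σ_s(b) α(s,t) u_{st}` when `d(s) = c(t)`, else `0`. -/
noncomputable def catMul {G : Type*} [Category G] {A : G → Type*} [∀ e, Ring (A e)]
    (σ : ∀ e f : G, (e ⟶ f) → (A e →+* A f))
    (α : ∀ e f g : G, (f ⟶ g) → (e ⟶ f) → A g)
    (x y : CP A) : CP A :=
  x.sum fun p a => y.sum fun q b =>
    if h : q.2.1 = p.1 then
      DFinsupp.single (⟨q.1, p.2.1, (q.2.2 ≫ eqToHom h) ≫ p.2.2⟩ : CMor G)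
        (a * σ p.1 p.2.1 p.2.2 (castRH A h b) * α q.1 p.1 p.2.1 p.2.2 (q.2.2 ≫ eqToHom h))
    else 0

open Classical in
/-- `a u_s`, the formal sum supported on a single morphism. -/
noncomputable def catSingle {G : Type*} [Category G] {A : G → Type*} [∀ e, Ring (A e)]
    (p : CMor G) (a : A p.2.1) : CP A := DFinsupp.single p a


section Helpers
open Classical DFinsupp

variable {G : Type*} [Category G] {A : G → Type*} [∀ e, Ring (A e)]
variable (σ : ∀ e f : G, (e ⟶ f) → (A e →+* A f))
variable (α : ∀ e f g : G, (f ⟶ g) → (e ⟶ f) → A g)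

omit [Category _] in
@[simp] lemma castRH_rfl {e : G} : castRH A (rfl : e = e) = RingHom.id (A e) := rfl

open Classical in
noncomputable def cterm (p : CMor G) (a : A p.2.1) (q : CMor G) (b : A q.2.1) : CP A :=
  if h : q.2.1 = p.1 then
    DFinsupp.single (⟨q.1, p.2.1, (q.2.2 ≫ eqToHom h) ≫ p.2.2⟩ : CMor G)
      (a * σ p.1 p.2.1 p.2.2 (castRH A h b) * α q.1 p.1 p.2.1 p.2.2 (q.2.2 ≫ eqToHom h))
  else 0

lemma single_mor_congr {e f : G} {g g' : e ⟶ f} (h : g = g') (a : A f) :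
    (DFinsupp.single (⟨e, f, g⟩ : CMor G) a : CP A)
      = DFinsupp.single (⟨e, f, g'⟩ : CMor G) a := by
  subst h; rfl

lemma catMul_def (x y : CP A) :
    catMul σ α x y = x.sum fun p a => y.sum fun q b => cterm σ α p a q b := rfl

lemma cterm_ne {p q : CMor G} (h : ¬ q.2.1 = p.1) (a : A p.2.1) (b : A q.2.1) :
    cterm σ α p a q b = 0 := by
  unfold cterm; rw [dif_neg h]

lemma cterm_zero_right (p : CMor G) (a : A p.2.1) (q : CMor G) :
    cterm σ α p a q 0 = 0 := by
  unfold cterm; split <;> simp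

lemma cterm_zero_left (p q : CMor G) (b : A q.2.1) :
    cterm σ α p 0 q b = 0 := by
  unfold cterm; split <;> simp

lemma mul_single (x : CP A) (q : CMor G) (b : A q.2.1) :
    catMul σ α x (DFinsupp.single q b) = x.sum fun p a => cterm σ α p a q b := by
  rw [catMul_def]
  exact Finset.sum_congr rfl fun p _ => sum_single_index (cterm_zero_right σ α p (x p) q)

lemma single_mul (p : CMor G) (a : A p.2.1) (x : CP A) :
    catMul σ α (DFinsupp.single p a) x = x.sum fun q b => cterm σ α p a q b := by
  rw [catMul_def]
  exact sum_single_index (Finset.sum_eq_zero fun q _ => cterm_zero_left σ α p q (x q))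

lemma central_iff (x : CP A) :
    (∀ y, catMul σ α x y = catMul σ α y x) ↔
      ∀ (q : CMor G) (b : A q.2.1),
        catMul σ α x (DFinsupp.single q b) = catMul σ α (DFinsupp.single q b) x := by
  constructor
  · intro h q b; exact h _
  · intro h y
    calc catMul σ α x y = y.sum fun q b => catMul σ α x (DFinsupp.single q b) := by
          rw [catMul_def, sum_comm]
          exact Finset.sum_congr rfl fun q _ => (mul_single σ α x q (y q)).symm
      _ = y.sum fun q b => catMul σ α (DFinsupp.single q b) x :=
          Finset.sum_congr rfl fun q _ => h q (y q)
      _ = catMul σ α y x := by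
          rw [catMul_def]
          exact Finset.sum_congr rfl fun q _ => single_mul σ α q (y q) x


lemma sum_dsingle_apply (x : CP A) (C : CMor G → Prop)
    (v : ∀ p, C p → A p.2.1 → A p.2.1) (hv : ∀ p h, v p h 0 = 0) (m : CMor G) :
    (x.sum fun p a => if h : C p then DFinsupp.single p (v p h a) else (0 : CP A)) m
      = if h : C m then v m h (x m) else 0 := by
  rw [DFinsupp.sum_apply, DFinsupp.sum]
  by_cases hm : m ∈ x.support
  · rw [Finset.sum_eq_single_of_mem m hm]
    · split
      · simp
      · simp
    · intro p hp hpm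
      split
      · exact DFinsupp.single_eq_of_ne (Ne.symm hpm)
      · rfl
  · rw [DFinsupp.notMem_support_iff] at hm
    rw [Finset.sum_eq_zero, hm]
    · split
      · rw [hv]
      · rfl
    · intro p hp
      have hpm : p ≠ m := by rintro rfl; rw [DFinsupp.mem_support_iff, hm] at hp; exact hp rfl
      split
      · exact DFinsupp.single_eq_of_ne (Ne.symm hpm)
      · rfl

/-- `cterm` against the identity at `e` on the right. -/
lemma cterm_id_right' (hα1r : ∀ (e f : G) (s : e ⟶ f), α e e f s (𝟙 e) = 1) (f : G) (b : A f) (p : CMor G) (a : A p.2.1) :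
    cterm σ α p a ⟨f, f, 𝟙 f⟩ b
      = if h : f = p.1 then
          DFinsupp.single p (a * σ p.1 p.2.1 p.2.2 (castRH A h b)) else 0 := by
  obtain ⟨p1, p2, g⟩ := p
  unfold cterm
  by_cases h : f = p1
  · subst h
    rw [dif_pos rfl, dif_pos rfl]
    simp only [hα1r, eqToHom_refl, castRH_rfl, RingHom.id_apply, Category.comp_id, mul_one]
    exact single_mor_congr (by simp) _
  · rw [dif_neg h, dif_neg h]

/-- `cterm` with the identity at `f` on the left. -/
lemma cterm_id_left' (hσ1 : ∀ e : G, σ e e (𝟙 e) = RingHom.id (A e))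
    (hα1l : ∀ (e f : G) (s : e ⟶ f), α e f f (𝟙 f) s = 1) (f : G) (b : A f) (q : CMor G) (b' : A q.2.1) :
    cterm σ α ⟨f, f, 𝟙 f⟩ b q b'
      = if h : q.2.1 = f then
          DFinsupp.single q (castRH A h.symm (b * castRH A h b')) else 0 := by
  obtain ⟨q1, q2, s⟩ := q
  unfold cterm
  by_cases h : q2 = f
  · subst h
    rw [dif_pos rfl, dif_pos rfl]
    simp only [hσ1, hα1l, eqToHom_refl, castRH_rfl, RingHom.id_apply, Category.comp_id, mul_one, one_mul]
    exact single_mor_congr (by simp) _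
  · rw [dif_neg h, dif_neg h]

lemma mul_idsingle_apply (hα1r : ∀ (e f : G) (s : e ⟶ f), α e e f s (𝟙 e) = 1) (x : CP A) (f : G) (b : A f) (m : CMor G) :
    (catMul σ α x (DFinsupp.single ⟨f, f, 𝟙 f⟩ b)) m
      = if h : f = m.1 then x m * σ m.1 m.2.1 m.2.2 (castRH A h b) else 0 := by
  rw [mul_single]
  rw [show (fun (p : CMor G) (a : A p.2.1) => cterm σ α p a ⟨f, f, 𝟙 f⟩ b)
      = fun (p : CMor G) a => if h : f = p.1 then
          DFinsupp.single p (a * σ p.1 p.2.1 p.2.2 (castRH A h b)) else 0 from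
    funext fun p => funext fun a => cterm_id_right' σ α hα1r f b p a]
  exact sum_dsingle_apply x _ _ (fun p h => by simp) m

lemma idsingle_mul_apply (hσ1 : ∀ e : G, σ e e (𝟙 e) = RingHom.id (A e))
    (hα1l : ∀ (e f : G) (s : e ⟶ f), α e f f (𝟙 f) s = 1) (x : CP A) (f : G) (b : A f) (m : CMor G) :
    (catMul σ α (DFinsupp.single ⟨f, f, 𝟙 f⟩ b) x) m
      = if h : m.2.1 = f then castRH A h.symm (b * castRH A h (x m)) else 0 := by
  rw [single_mul]
  rw [show (fun (q : CMor G) (b' : A q.2.1) => cterm σ α ⟨f, f, 𝟙 f⟩ b q b')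
      = fun (q : CMor G) b' => if h : q.2.1 = f then
          DFinsupp.single q (castRH A h.symm (b * castRH A h b')) else 0 from
    funext fun q => funext fun b' => cterm_id_left' σ α hσ1 hα1l f b q b']
  exact sum_dsingle_apply x _ _ (fun q h => by simp) m


lemma dsum_eq_finsum {R : Type*} [AddCommMonoid R] (x : CP A)
    (F : ∀ p : CMor G, A p.2.1 → R) (hF : ∀ p, F p 0 = 0) :
    x.sum F = ∑ᶠ p : CMor G, F p (x p) := by
  rw [finsum_eq_sum_of_support_subset (fun p => F p (x p)) (s := x.support)]
  · rfl
  · intro p hp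
    simp only [Function.mem_support] at hp
    simp only [Finset.coe_sort_coe, Finset.mem_coe, DFinsupp.mem_support_iff]
    intro h0
    rw [h0] at hp
    exact hp (hF p)

lemma coefL (x : CP A) (hdiag : ∀ p : CMor G, p.1 ≠ p.2.1 → x p = 0)
    (e f : G) (r : e ⟶ f) (b : A f) (g : e ⟶ f) :
    (catMul σ α x (DFinsupp.single ⟨e, f, r⟩ b)) ⟨e, f, g⟩
      = ∑ᶠ (t : f ⟶ f) (_ : r ≫ t = g), x ⟨f, f, t⟩ * σ f f t b * α e f f t r := by
  have hinj : Function.Injective (fun t : f ⟶ f => (⟨f, f, t⟩ : CMor G)) := by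
    intro t t' h
    simpa [Sigma.mk.inj_iff] using h
  rw [mul_single, DFinsupp.sum_apply,
    dsum_eq_finsum x (fun p a => (cterm σ α p a ⟨e, f, r⟩ b) ⟨e, f, g⟩)
      (fun p => by show (cterm σ α p 0 ⟨e, f, r⟩ b) ⟨e, f, g⟩ = 0; rw [cterm_zero_left]; rfl)]
  rw [← finsum_mem_univ, finsum_mem_inter_support_eq _ _
    (Set.range fun t : f ⟶ f => (⟨f, f, t⟩ : CMor G)) ?_, finsum_mem_range hinj]
  · refine finsum_congr fun t => ?_
    rw [finsum_eq_if]
    unfold cterm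
    rw [dif_pos rfl]
    simp only [eqToHom_refl, Category.comp_id, castRH_rfl, RingHom.id_apply]
    by_cases hrt : r ≫ t = g
    · subst hrt
      rw [if_pos rfl, single_mor_congr (show (r ≫ 𝟙 f) ≫ t = r ≫ t by simp)]
      exact DFinsupp.single_eq_same
    · rw [if_neg hrt]
      apply DFinsupp.single_eq_of_ne
      intro hc
      apply hrt
      simpa [Sigma.mk.inj_iff] using hc.symm
  · ext p
    simp only [Set.mem_inter_iff, Set.mem_univ, true_and, Function.mem_support, Set.mem_range]
    refine ⟨fun hp => ⟨?_, hp⟩, fun h => h.2⟩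
    by_cases hx : x p = 0
    · exfalso; apply hp; rw [hx, cterm_zero_left]; rfl
    · obtain ⟨p1, p2, t⟩ := p
      have h1 : f = p1 := by
        by_contra hne
        apply hp
        unfold cterm
        rw [dif_neg hne]
        rfl
      have h2 : p1 = p2 := not_not.mp fun h => hx (hdiag ⟨p1, p2, t⟩ h)
      subst h1; subst h2
      exact ⟨t, rfl⟩

lemma coefR (x : CP A) (hdiag : ∀ p : CMor G, p.1 ≠ p.2.1 → x p = 0)
    (e f : G) (r : e ⟶ f) (b : A f) (g : e ⟶ f) :
    (catMul σ α (DFinsupp.single ⟨e, f, r⟩ b) x) ⟨e, f, g⟩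
      = ∑ᶠ (s : e ⟶ e) (_ : s ≫ r = g), b * σ e f r (x ⟨e, e, s⟩) * α e e f r s := by
  have hinj : Function.Injective (fun s : e ⟶ e => (⟨e, e, s⟩ : CMor G)) := by
    intro t t' h
    simpa [Sigma.mk.inj_iff] using h
  rw [single_mul, DFinsupp.sum_apply,
    dsum_eq_finsum x (fun q b' => (cterm σ α ⟨e, f, r⟩ b q b') ⟨e, f, g⟩)
      (fun q => by show (cterm σ α ⟨e, f, r⟩ b q 0) ⟨e, f, g⟩ = 0; rw [cterm_zero_right]; rfl)]
  rw [← finsum_mem_univ, finsum_mem_inter_support_eq _ _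
    (Set.range fun s : e ⟶ e => (⟨e, e, s⟩ : CMor G)) ?_, finsum_mem_range hinj]
  · refine finsum_congr fun s => ?_
    rw [finsum_eq_if]
    unfold cterm
    rw [dif_pos rfl]
    simp only [eqToHom_refl, Category.comp_id, castRH_rfl, RingHom.id_apply]
    by_cases hsr : s ≫ r = g
    · subst hsr
      rw [if_pos rfl, single_mor_congr (show (s ≫ 𝟙 e) ≫ r = s ≫ r by simp)]
      exact DFinsupp.single_eq_same
    · rw [if_neg hsr]
      apply DFinsupp.single_eq_of_ne
      intro hc
      apply hsr
      simpa [Sigma.mk.inj_iff] using hc.symm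
  · ext q
    simp only [Set.mem_inter_iff, Set.mem_univ, true_and, Function.mem_support, Set.mem_range]
    refine ⟨fun hq => ⟨?_, hq⟩, fun h => h.2⟩
    by_cases hx : x q = 0
    · exfalso; apply hq; rw [hx, cterm_zero_right]; rfl
    · obtain ⟨q1, q2, t⟩ := q
      have h1 : q2 = e := by
        by_contra hne
        apply hq
        unfold cterm
        rw [dif_neg hne]
        rfl
      have h2 : q1 = q2 := not_not.mp fun h => hx (hdiag ⟨q1, q2, t⟩ h)
      subst h2; subst h1
      exact ⟨t, rfl⟩

lemma coefL_ne (x : CP A) (hdiag : ∀ p : CMor G, p.1 ≠ p.2.1 → x p = 0)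
    (e f : G) (r : e ⟶ f) (b : A f) (m : CMor G) (hm : ¬(m.1 = e ∧ m.2.1 = f)) :
    (catMul σ α x (DFinsupp.single ⟨e, f, r⟩ b)) m = 0 := by
  rw [mul_single, DFinsupp.sum_apply, DFinsupp.sum]
  apply Finset.sum_eq_zero
  intro p hp
  rw [DFinsupp.mem_support_iff] at hp
  have hd : p.1 = p.2.1 := not_not.mp fun h => hp (hdiag p h)
  unfold cterm
  split
  · next h =>
    apply DFinsupp.single_eq_of_ne
    intro hc
    subst hc
    exact hm ⟨rfl, (h.trans hd).symm⟩
  · rfl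

lemma coefR_ne (x : CP A) (hdiag : ∀ p : CMor G, p.1 ≠ p.2.1 → x p = 0)
    (e f : G) (r : e ⟶ f) (b : A f) (m : CMor G) (hm : ¬(m.1 = e ∧ m.2.1 = f)) :
    (catMul σ α (DFinsupp.single ⟨e, f, r⟩ b) x) m = 0 := by
  rw [single_mul, DFinsupp.sum_apply, DFinsupp.sum]
  apply Finset.sum_eq_zero
  intro q hq
  rw [DFinsupp.mem_support_iff] at hq
  have hd : q.1 = q.2.1 := not_not.mp fun h => hq (hdiag q h)
  unfold cterm
  split
  · next h =>
    apply DFinsupp.single_eq_of_ne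
    intro hc
    subst hc
    exact hm ⟨hd.trans h, rfl⟩
  · rfl

lemma filter_mul_eq (x y : CP A) (e : G)
    (hdiag : ∀ p : CMor G, p.1 ≠ p.2.1 → x p = 0)
    (hy : ∀ q : CMor G, y q ≠ 0 → q.1 = e ∧ q.2.1 = e) :
    catMul σ α (x.filter fun q => q.1 = e ∧ q.2.1 = e) y = catMul σ α x y := by
  rw [catMul_def, catMul_def, DFinsupp.sum, DFinsupp.sum, DFinsupp.support_filter]
  refine (Finset.sum_congr rfl fun p hp => ?_).trans
    (Finset.sum_subset (Finset.filter_subset _ _) fun p hp hnp => ?_)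
  · rw [DFinsupp.filter_apply_pos]
    exact (Finset.mem_filter.mp hp).2
  · rw [DFinsupp.mem_support_iff] at hp
    have h2 : p.1 = p.2.1 := not_not.mp fun h => hp (hdiag p h)
    have h3 : ¬(p.1 = e ∧ p.2.1 = e) := fun hP =>
      hnp (Finset.mem_filter.mpr ⟨DFinsupp.mem_support_iff.mpr hp, hP⟩)
    apply Finset.sum_eq_zero
    intro q hq
    have h1 := hy q (DFinsupp.mem_support_iff.mp hq)
    exact cterm_ne σ α (fun hc => h3 ⟨hc.symm.trans h1.2, h2.symm.trans (hc.symm.trans h1.2)⟩) _ _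

lemma mul_filter_eq (x y : CP A) (e : G)
    (hdiag : ∀ p : CMor G, p.1 ≠ p.2.1 → x p = 0)
    (hy : ∀ q : CMor G, y q ≠ 0 → q.1 = e ∧ q.2.1 = e) :
    catMul σ α y (x.filter fun q => q.1 = e ∧ q.2.1 = e) = catMul σ α y x := by
  rw [catMul_def, catMul_def]
  refine Finset.sum_congr rfl fun p hp => ?_
  show ((x.filter fun q => q.1 = e ∧ q.2.1 = e)).sum (fun q b => cterm σ α p (y p) q b)
    = x.sum fun q b => cterm σ α p (y p) q b
  rw [DFinsupp.sum, DFinsupp.sum, DFinsupp.support_filter]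
  refine (Finset.sum_congr rfl fun q hq => ?_).trans
    (Finset.sum_subset (Finset.filter_subset _ _) fun q hq hnq => ?_)
  · rw [DFinsupp.filter_apply_pos]
    exact (Finset.mem_filter.mp hq).2
  · rw [DFinsupp.mem_support_iff] at hq
    have h2 : q.1 = q.2.1 := not_not.mp fun h => hq (hdiag q h)
    have h1 := (hy p (DFinsupp.mem_support_iff.mp hp)).1
    have h3 : ¬(q.1 = e ∧ q.2.1 = e) := fun hP =>
      hnq (Finset.mem_filter.mpr ⟨DFinsupp.mem_support_iff.mpr hq, hP⟩)
    exact cterm_ne σ α (fun hc => h3 ⟨h2.trans (hc.trans h1), hc.trans h1⟩) _ _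


lemma single_supp_cond (e : G) (g0 : e ⟶ e) (b : A e) :
    ∀ q' : CMor G, (DFinsupp.single (⟨e, e, g0⟩ : CMor G) b : CP A) q' ≠ 0 →
      q'.1 = e ∧ q'.2.1 = e := by
  intro q' h
  have heq : (⟨e, e, g0⟩ : CMor G) = q' := by
    by_contra hne
    exact h (DFinsupp.single_eq_of_ne (Ne.symm hne))
  cases heq
  exact ⟨rfl, rfl⟩

lemma comm_of_cond2 (x : CP A)
    (hσ1 : ∀ e : G, σ e e (𝟙 e) = RingHom.id (A e))
    (hα1r : ∀ (e f : G) (s : e ⟶ f), α e e f s (𝟙 e) = 1)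
    (hα1l : ∀ (e f : G) (s : e ⟶ f), α e f f (𝟙 f) s = 1)
    (h2 : ∀ e : G, ∀ y : CP A, (∀ q : CMor G, y q ≠ 0 → q.1 = e ∧ q.2.1 = e) →
      catMul σ α (x.filter fun q => q.1 = e ∧ q.2.1 = e) y
        = catMul σ α y (x.filter fun q => q.1 = e ∧ q.2.1 = e))
    (f : G) (t : f ⟶ f) (b : A f) :
    x ⟨f, f, t⟩ * σ f f t b = b * x ⟨f, f, t⟩ := by
  have E := DFunLike.congr_fun
    (h2 f (DFinsupp.single ⟨f, f, 𝟙 f⟩ b) (single_supp_cond f (𝟙 f) b)) ⟨f, f, t⟩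
  rw [mul_idsingle_apply σ α hα1r _ f b ⟨f, f, t⟩,
    idsingle_mul_apply σ α hσ1 hα1l _ f b ⟨f, f, t⟩, dif_pos rfl, dif_pos rfl] at E
  have hs : (rfl : f = f).symm = rfl := rfl
  rw [hs, castRH_rfl] at E
  simp only [RingHom.id_apply] at E
  rwa [DFinsupp.filter_apply_pos (p := fun q : CMor G => q.1 = f ∧ q.2.1 = f) x
    (⟨rfl, rfl⟩ : (⟨f, f, t⟩ : CMor G).1 = f ∧ (⟨f, f, t⟩ : CMor G).2.1 = f)] at E

lemma finsum_cond_mul_left {β : Type*} {R : Type*} [Ring R] (b : R) (P : β → Prop)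
    (w : β → R) (hfin : (Function.support fun t => if P t then w t else 0).Finite) :
    (∑ᶠ (t : β) (_ : P t), b * w t) = b * ∑ᶠ (t : β) (_ : P t), w t := by
  have hrep : (fun t => ∑ᶠ _ : P t, w t) = fun t => if P t then w t else 0 :=
    funext fun t => finsum_eq_if
  calc (∑ᶠ (t : β) (_ : P t), b * w t) = ∑ᶠ t : β, if P t then b * w t else 0 :=
      finsum_congr fun t => finsum_eq_if
    _ = ∑ᶠ t : β, b * (if P t then w t else 0) :=
      finsum_congr fun t => by split <;> simp
    _ = b * ∑ᶠ t : β, if P t then w t else 0 := (mul_finsum' _ b hfin).symm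
    _ = b * ∑ᶠ (t : β) (_ : P t), w t := by rw [← hrep]

end Helpers

open Classical in
/-- an element `x` of a category crossed product is central iff its
coefficients vanish on morphisms with `d(s) ≠ c(s)`, each component over an
endomorphism monoid `G_e` is central in the monoid crossed product
`A_e ⋊_{α_e}^{σ_e} G_e` (= the subring of elements supported on `G_e`), and for
all distinct objects `e ≠ f` and all `r, g ∈ G_{f,e}`,
`Σ_{s ∈ G_e, rs = g} σ_r(a_s) α(r,s) = Σ_{t ∈ G_f, tr = g} a_t α(t,r)`. -/
theorem center_category_crossed_product
    {G : Type*} [CategoryTheory.Category G] {A : G → Type*} [∀ e, Ring (A e)]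
    (σ : ∀ e f : G, (e ⟶ f) → (A e →+* A f))
    (α : ∀ e f g : G, (f ⟶ g) → (e ⟶ f) → A g)
    (hσ1 : ∀ e : G, σ e e (𝟙 e) = RingHom.id (A e))
    (hα1r : ∀ (e f : G) (s : e ⟶ f), α e e f s (𝟙 e) = 1)
    (hα1l : ∀ (e f : G) (s : e ⟶ f), α e f f (𝟙 f) s = 1)
    (hcoc : ∀ (e f g h : G) (s : g ⟶ h) (t : f ⟶ g) (r : e ⟶ f),
      α f g h s t * α e f h (t ≫ s) r = σ g h s (α e f g t r) * α e g h s (r ≫ t))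
    (htw : ∀ (e f g : G) (s : f ⟶ g) (t : e ⟶ f) (a : A e),
      σ f g s (σ e f t a) * α e f g s t = α e f g s t * σ e g (t ≫ s) a)
    (x : CP A) :
    (∀ y, catMul σ α x y = catMul σ α y x) ↔
      ((∀ p : CMor G, p.1 ≠ p.2.1 → x p = 0) ∧
        (∀ e : G, ∀ y : CP A, (∀ q : CMor G, y q ≠ 0 → q.1 = e ∧ q.2.1 = e) →
          catMul σ α (x.filter fun q => q.1 = e ∧ q.2.1 = e) y
            = catMul σ α y (x.filter fun q => q.1 = e ∧ q.2.1 = e)) ∧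
        (∀ e f : G, e ≠ f → ∀ r g : e ⟶ f,
          (∑ᶠ (s : e ⟶ e) (_ : s ≫ r = g), σ e f r (x ⟨e, e, s⟩) * α e e f r s)
            = ∑ᶠ (t : f ⟶ f) (_ : r ≫ t = g), x ⟨f, f, t⟩ * α e f f t r)) := by
  constructor
  · intro hc
    have hd : ∀ p : CMor G, p.1 ≠ p.2.1 → x p = 0 := by
      intro p hp
      have E := DFunLike.congr_fun (hc (DFinsupp.single ⟨p.1, p.1, 𝟙 p.1⟩ (1 : A p.1))) p
      rw [mul_idsingle_apply σ α hα1r x p.1 1 p, idsingle_mul_apply σ α hσ1 hα1l x p.1 1 p,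
        dif_pos rfl, dif_neg (fun h => hp h.symm)] at E
      simpa using E
    refine ⟨hd, ?_, ?_⟩
    · intro e y hy
      calc catMul σ α (x.filter fun q => q.1 = e ∧ q.2.1 = e) y
          = catMul σ α x y := filter_mul_eq σ α x y e hd hy
        _ = catMul σ α y x := hc y
        _ = catMul σ α y (x.filter fun q => q.1 = e ∧ q.2.1 = e) :=
          (mul_filter_eq σ α x y e hd hy).symm
    · intro e f hef r g
      have E := DFunLike.congr_fun (hc (DFinsupp.single ⟨e, f, r⟩ (1 : A f))) ⟨e, f, g⟩
      rw [coefL σ α x hd e f r 1 g, coefR σ α x hd e f r 1 g] at E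
      calc (∑ᶠ (s : e ⟶ e) (_ : s ≫ r = g), σ e f r (x ⟨e, e, s⟩) * α e e f r s)
          = ∑ᶠ (s : e ⟶ e) (_ : s ≫ r = g), 1 * σ e f r (x ⟨e, e, s⟩) * α e e f r s :=
            finsum_congr fun s => finsum_congr fun _ => by rw [one_mul]
        _ = ∑ᶠ (t : f ⟶ f) (_ : r ≫ t = g), x ⟨f, f, t⟩ * σ f f t 1 * α e f f t r := E.symm
        _ = ∑ᶠ (t : f ⟶ f) (_ : r ≫ t = g), x ⟨f, f, t⟩ * α e f f t r :=
            finsum_congr fun t => finsum_congr fun _ => by rw [map_one, mul_one]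
  · rintro ⟨hd, h2, h3⟩
    refine (central_iff σ α x).mpr ?_
    rintro ⟨e, f, r⟩ b
    by_cases hef : e = f
    · subst hef
      have hy := single_supp_cond e r b
      calc catMul σ α x (DFinsupp.single ⟨e, e, r⟩ b)
          = catMul σ α (x.filter fun q => q.1 = e ∧ q.2.1 = e)
              (DFinsupp.single ⟨e, e, r⟩ b) := (filter_mul_eq σ α x _ e hd hy).symm
        _ = catMul σ α (DFinsupp.single ⟨e, e, r⟩ b)
              (x.filter fun q => q.1 = e ∧ q.2.1 = e) := h2 e _ hy
        _ = catMul σ α (DFinsupp.single ⟨e, e, r⟩ b) x := mul_filter_eq σ α x _ e hd hy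
    · ext m
      obtain ⟨m1, m2, mg⟩ := m
      by_cases hm : m1 = e ∧ m2 = f
      · obtain ⟨h1', h2'⟩ := hm
        subst m1; subst m2
        rw [coefL σ α x hd e f r b mg, coefR σ α x hd e f r b mg]
        have hfin1 : (Function.support fun t : f ⟶ f =>
            if r ≫ t = mg then x ⟨f, f, t⟩ * α e f f t r else (0 : A f)).Finite := by
          apply Set.Finite.subset
            (Set.Finite.preimage (Function.Injective.injOn
              (fun t t' h => by simpa [Sigma.mk.inj_iff] using h :
                Function.Injective fun t : f ⟶ f => (⟨f, f, t⟩ : CMor G)))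
              x.support.finite_toSet)
          intro t ht
          simp only [Function.mem_support] at ht
          simp only [Set.mem_preimage, Finset.mem_coe, DFinsupp.mem_support_iff]
          intro h0
          exact ht (by simp [h0])
        have hfin2 : (Function.support fun s : e ⟶ e =>
            if s ≫ r = mg then σ e f r (x ⟨e, e, s⟩) * α e e f r s else (0 : A f)).Finite := by
          apply Set.Finite.subset
            (Set.Finite.preimage (Function.Injective.injOn
              (fun t t' h => by simpa [Sigma.mk.inj_iff] using h :
                Function.Injective fun s : e ⟶ e => (⟨e, e, s⟩ : CMor G)))
              x.support.finite_toSet)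
          intro s hs
          simp only [Function.mem_support] at hs
          simp only [Set.mem_preimage, Finset.mem_coe, DFinsupp.mem_support_iff]
          intro h0
          exact hs (by simp [h0])
        calc (∑ᶠ (t : f ⟶ f) (_ : r ≫ t = mg), x ⟨f, f, t⟩ * σ f f t b * α e f f t r)
            = ∑ᶠ (t : f ⟶ f) (_ : r ≫ t = mg), b * (x ⟨f, f, t⟩ * α e f f t r) :=
              finsum_congr fun t => finsum_congr fun _ => by
                rw [comm_of_cond2 σ α x hσ1 hα1r hα1l h2 f t b, mul_assoc]
          _ = b * ∑ᶠ (t : f ⟶ f) (_ : r ≫ t = mg), x ⟨f, f, t⟩ * α e f f t r :=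
              finsum_cond_mul_left b _ _ hfin1
          _ = b * ∑ᶠ (s : e ⟶ e) (_ : s ≫ r = mg), σ e f r (x ⟨e, e, s⟩) * α e e f r s := by
              rw [h3 e f hef r mg]
          _ = ∑ᶠ (s : e ⟶ e) (_ : s ≫ r = mg), b * (σ e f r (x ⟨e, e, s⟩) * α e e f r s) :=
              (finsum_cond_mul_left b _ _ hfin2).symm
          _ = ∑ᶠ (s : e ⟶ e) (_ : s ≫ r = mg), b * σ e f r (x ⟨e, e, s⟩) * α e e f r s :=
              finsum_congr fun s => finsum_congr fun _ => by rw [mul_assoc]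
      · rw [coefL_ne σ α x hd e f r b ⟨m1, m2, mg⟩ hm, coefR_ne σ α x hd e f r b ⟨m1, m2, mg⟩ hm]
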